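/- Let T : L* → V* be the concatenative extension of an injective eow-marking tokeniser τ : L → V_mid* ∘ V_eow, p a probability distribution over L*, and q its pushforward to V*. Then for any w ∈ L*: Σ_{u ∈ w ∘ L*} p(u) = Σ_{x ∈ T(w) ∘ V*} q(x), i.e., the prefix probability of the word sequence w under p equals the prefix probability of T(w) under q. -/

import Mathlib

open scoped ENNReal

lemma stmt_7_shape_prefix {V : Type*} (Vmid Veow : Set V) (hdisj : Disjoint Vmid Veow) :
    ∀ (m1 : List V) (e1 : V) (m2 : List V) (e2 : V),
      (∀ a ∈ m1, a ∈ Vmid) → e1 ∈ Veow → (∀ a ∈ m2, a ∈ Vmid) → e2 ∈ Veow →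
      m1 ++ [e1] <+: m2 ++ [e2] → m1 ++ [e1] = m2 ++ [e2] := by
  intro m1
  induction m1 with
  | nil =>
    intro e1 m2 e2 _ he1 hm2 he2 h
    cases m2 with
    | nil =>
      simp only [List.nil_append] at h ⊢
      rw [List.cons_prefix_cons] at h
      rw [h.1]
    | cons c m2 =>
      exfalso
      simp only [List.nil_append, List.cons_append] at h
      rw [List.cons_prefix_cons] at h
      have : e1 ∈ Vmid := h.1 ▸ hm2 c List.mem_cons_self
      exact hdisj.ne_of_mem this he1 rfl
  | cons a m1 ih =>
    intro e1 m2 e2 hm1 he1 hm2 he2 h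
    cases m2 with
    | nil =>
      exfalso
      simp only [List.cons_append, List.nil_append] at h
      rw [List.cons_prefix_cons] at h
      have : a ∈ Vmid := hm1 a List.mem_cons_self
      exact hdisj.ne_of_mem this he2 h.1
    | cons b m2 =>
      simp only [List.cons_append] at h ⊢
      rw [List.cons_prefix_cons] at h
      rw [h.1, ih e1 m2 e2 (fun x hx => hm1 x (List.mem_cons_of_mem a hx)) he1
        (fun x hx => hm2 x (List.mem_cons_of_mem b hx)) he2 h.2]

theorem stmt_7 {L V : Type*} [Countable L] [Countable V] [DecidableEq V] (Vmid Veow : Set V)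
    (hdisj : Disjoint Vmid Veow) (hcover : Vmid ∪ Veow = Set.univ)
    (τ : L → List V) (hτ : Function.Injective τ)
    (hshape : ∀ w : L, ∃ (m : List V) (e : V),
      (∀ a ∈ m, a ∈ Vmid) ∧ e ∈ Veow ∧ τ w = m ++ [e])
    (hTinj : Function.Injective (fun ws : List L => (ws.map τ).flatten))
    (p : List L → ℝ≥0∞) (hp : ∑' u : List L, p u = 1)
    (q : List V → ℝ≥0∞)
    (hq : ∀ x : List V, q x = ∑' u : List L, p u * (if x = (u.map τ).flatten then 1 else 0))
    (w : List L) :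
    ∑' u : {u : List L // w <+: u}, p u.val =
      ∑' x : {x : List V // (w.map τ).flatten <+: x}, q x.val := by
  classical
  set T : List L → List V := fun ws => (ws.map τ).flatten with hTdef
  have key : ∀ (w u : List L), T w <+: T u ↔ w <+: u := by
    intro w
    induction w with
    | nil => intro u; simp [T]
    | cons a w ih =>
      intro u
      constructor
      · intro h
        cases u with
        | nil =>
          exfalso
          obtain ⟨m, e, hm, he, heq⟩ := hshape a
          have := h.length_le
          simp [T, heq] at this
        | cons b u =>
          have h' : τ a ++ T w <+: τ b ++ T u := by simpa [T] using h
          have hab : τ a = τ b := by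
            obtain ⟨ma, ea, hma, hea, heqa⟩ := hshape a
            obtain ⟨mb, eb, hmb, heb, heqb⟩ := hshape b
            have h1 : τ a <+: τ b ++ T u :=
              (List.prefix_append (τ a) (T w)).trans h'
            have h2 : τ b <+: τ b ++ T u := List.prefix_append _ _
            rcases List.prefix_or_prefix_of_prefix h1 h2 with hc | hc
            · rw [heqa, heqb] at hc ⊢
              exact stmt_7_shape_prefix Vmid Veow hdisj _ _ _ _ hma hea hmb heb hc
            · rw [heqa, heqb] at hc ⊢
              exact (stmt_7_shape_prefix Vmid Veow hdisj _ _ _ _ hmb heb hma hea hc).symm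
          rw [hab] at h'
          have := (List.prefix_append_right_inj (τ b)).mp h'
          exact List.cons_prefix_cons.mpr ⟨hτ hab, (ih u).mp this⟩
      · rintro ⟨t, rfl⟩
        exact ⟨T t, by simp [T]⟩
  have inner : ∀ u : List L,
      (∑' x : {x : List V // T w <+: x}, p u * (if x.val = T u then 1 else 0))
        = if w <+: u then p u else 0 := by
    intro u
    by_cases hwu : w <+: u
    · have hmem : T w <+: T u := (key w u).mpr hwu
      rw [tsum_eq_single (⟨T u, hmem⟩ : {x : List V // T w <+: x})]
      · simp [hwu]
      · intro x hx
        have : x.val ≠ T u := fun hv => hx (Subtype.ext hv)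
        simp [this]
    · have : ∀ x : {x : List V // T w <+: x},
          p u * (if x.val = T u then 1 else 0) = 0 := by
        intro x
        have : x.val ≠ T u := by
          intro hv
          exact hwu ((key w u).mp (hv ▸ x.property))
        simp [this]
      rw [if_neg hwu, tsum_congr this, tsum_zero]
  calc ∑' u : {u : List L // w <+: u}, p u.val
      = ∑' u : List L, if w <+: u then p u else 0 := by
        have h := tsum_subtype {u : List L | w <+: u} p
        simp only [Set.indicator_apply, Set.mem_setOf_eq] at h
        exact h
    _ = ∑' u : List L, ∑' x : {x : List V // T w <+: x},
          p u * (if x.val = T u then 1 else 0) := tsum_congr fun u => (inner u).symm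
    _ = ∑' x : {x : List V // T w <+: x}, ∑' u : List L,
          p u * (if x.val = T u then 1 else 0) := ENNReal.tsum_comm
    _ = ∑' x : {x : List V // T w <+: x}, q x.val :=
        tsum_congr fun x => ((hq x.val).symm)
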